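/- Every tautology of propositional logic built only from propositional letters, negation, and disjunction is provable in the proof system whose axioms are A ∨ ¬A ∨ B̄ and whose rules are: permutation of disjuncts, associativity (from A ∨ (B ∨ C̄) infer (A ∨ B) ∨ C̄), double negation introduction (from A ∨ B̄ infer ¬¬A ∨ B̄), and De Morgan (from ¬A ∨ C̄ and ¬B ∨ C̄ infer ¬(A ∨ B) ∨ C̄). -/
import Mathlib


/-- Propositional formulas built from letters by negation and disjunction. -/
inductive Fm where
  | letter : ℕ → Fm
  | neg : Fm → Fm
  | or : Fm → Fm → Fm
deriving DecidableEq

/-- Boolean evaluation under a valuation of the letters. -/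
def Fm.eval (v : ℕ → Bool) : Fm → Bool
  | .letter n => v n
  | .neg a => !(a.eval v)
  | .or a b => a.eval v || b.eval v

/-- A formula is a tautology if it is true under every valuation. -/
def Taut (A : Fm) : Prop := ∀ v : ℕ → Bool, A.eval v = true

/-- Right-associated disjunction `A ∨ B₁ ∨ ⋯ ∨ Bₙ` (the list possibly empty). -/
def disj : Fm → List Fm → Fm
  | A, [] => A
  | A, B :: l => .or A (disj B l)

/-- Provability: axiom scheme `A ∨ ¬A ∨ B̄`, rules: permutation of disjuncts,
associativity, double negation introduction, De Morgan. -/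
inductive Prov : Fm → Prop where
  | ax (A : Fm) (l : List Fm) : Prov (disj A (.neg A :: l))
  | perm (A B : Fm) (l l' : List Fm) : (A :: l).Perm (B :: l') →
      Prov (disj A l) → Prov (disj B l')
  | assoc (A B : Fm) (l : List Fm) :
      Prov (disj A (B :: l)) → Prov (disj (.or A B) l)
  | dneg (A : Fm) (l : List Fm) :
      Prov (disj A l) → Prov (disj (.neg (.neg A)) l)
  | demorgan (A B : Fm) (l : List Fm) :
      Prov (disj (.neg A) l) → Prov (disj (.neg B) l) →
      Prov (disj (.neg (.or A B)) l)

namespace CompletenessAux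

def sz : Fm → ℕ
  | .letter _ => 1
  | .neg a => sz a + 1
  | .or a b => sz a + sz b + 1

def lsz (l : List Fm) : ℕ := (l.map sz).sum

lemma sz_pos (A : Fm) : 0 < sz A := by cases A <;> simp [sz]

/-- Provability of a nonempty list, seen as a sequent. -/
def ProvL : List Fm → Prop
  | [] => False
  | A :: l => Prov (disj A l)

lemma provL_perm {l l' : List Fm} (hp : l.Perm l') (h : ProvL l) : ProvL l' := by
  cases l with
  | nil => exact h.elim
  | cons A t =>
    cases l' with
    | nil => exact absurd hp.symm (by simp)
    | cons B t' => exact Prov.perm A B t t' hp h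

def isLit : Fm → Prop
  | .letter _ => True
  | .neg (.letter _) => True
  | _ => False

instance : DecidablePred isLit := fun A => by
  unfold isLit
  rcases A with _ | (_ | _ | _) | _ <;> simp <;> infer_instance

lemma lsz_perm {l l' : List Fm} (hp : l.Perm l') : lsz l = lsz l' :=
  (hp.map sz).sum_eq

lemma evalL_perm {l l' : List Fm} (hp : l.Perm l') (v : ℕ → Bool) :
    l.any (·.eval v) = l'.any (·.eval v) := by
  induction hp with
  | nil => rfl
  | cons x _ ih => simp [List.any_cons, ih]
  | swap x y l => simp [List.any_cons]; cases x.eval v <;> simp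
  | trans _ _ ih1 ih2 => rw [ih1, ih2]

/-- The clash lemma: a tautological list of literals contains a complementary pair. -/
lemma clash {l : List Fm} (hlit : ∀ C ∈ l, isLit C)
    (htaut : ∀ v : ℕ → Bool, l.any (·.eval v) = true) :
    ∃ n, Fm.letter n ∈ l ∧ Fm.neg (Fm.letter n) ∈ l := by
  by_contra hc
  push_neg at hc
  set v : ℕ → Bool := fun n => decide (Fm.neg (Fm.letter n) ∈ l) with hv
  have := htaut v
  rw [List.any_eq_true] at this
  obtain ⟨C, hCl, hCe⟩ := this
  have := hlit C hCl
  rcases C with n | (n | _ | _) | _ <;> simp [isLit] at this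
  · -- C = letter n
    simp [Fm.eval, hv] at hCe
    exact hc n hCl hCe
  · -- C = neg (letter n)
    simp [Fm.eval, hv] at hCe
    exact hCe hCl

lemma main : ∀ (n : ℕ) (l : List Fm), lsz l ≤ n → l ≠ [] →
    (∀ v : ℕ → Bool, l.any (·.eval v) = true) → ProvL l := by
  intro n
  induction n with
  | zero =>
    intro l hn hne _
    cases l with
    | nil => exact absurd rfl hne
    | cons A t =>
      exfalso
      have := sz_pos A
      simp [lsz] at hn
      omega
  | succ n ih =>
    intro l hn hne htaut
    by_cases hall : ∀ C ∈ l, isLit C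
    · obtain ⟨m, hm1, hm2⟩ := clash hall htaut
      have hm2' : Fm.neg (Fm.letter m) ∈ l.erase (Fm.letter m) := by
        apply (List.mem_erase_of_ne (by simp)).mpr hm2
      have hp : l.Perm (Fm.letter m :: Fm.neg (Fm.letter m) ::
          (l.erase (Fm.letter m)).erase (Fm.neg (Fm.letter m))) := by
        refine (List.perm_cons_erase hm1).trans ?_
        exact List.Perm.cons _ (List.perm_cons_erase hm2')
      exact provL_perm hp.symm (Prov.ax (Fm.letter m) _)
    · push_neg at hall
      obtain ⟨C, hCl, hCnl⟩ := hall
      set rest := l.erase C with hrest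
      have hp : l.Perm (C :: rest) := List.perm_cons_erase hCl
      have hsz : lsz l = sz C + lsz rest := by
        rw [lsz_perm hp]; simp [lsz]
      have htaut' : ∀ v : ℕ → Bool, (C :: rest).any (·.eval v) = true := by
        intro v; rw [← evalL_perm hp]; exact htaut v
      rcases C with m | (m | B | ⟨B, C'⟩) | ⟨B, C'⟩
      · exact absurd trivial hCnl
      · exact absurd trivial hCnl
      · -- ¬¬B
        have h1 : ProvL (B :: rest) := by
          apply ih (B :: rest)
          · simp [lsz, sz] at hsz hn ⊢; omega
          · simp
          · intro v
            have := htaut' v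
            simp [Fm.eval, List.any_cons] at this ⊢
            tauto
        have : Prov (disj (Fm.neg (Fm.neg B)) rest) := Prov.dneg B rest h1
        exact provL_perm hp.symm this
      · -- ¬(B ∨ C')
        have h1 : ProvL (Fm.neg B :: rest) := by
          apply ih
          · simp [lsz, sz] at hsz hn ⊢; omega
          · simp
          · intro v
            have := htaut' v
            simp [Fm.eval, List.any_cons] at this ⊢
            tauto
        have h2 : ProvL (Fm.neg C' :: rest) := by
          apply ih
          · simp [lsz, sz] at hsz hn ⊢; omega
          · simp
          · intro v
            have := htaut' v
            simp [Fm.eval, List.any_cons] at this ⊢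
            tauto
        exact provL_perm hp.symm (Prov.demorgan B C' rest h1 h2)
      · -- B ∨ C'
        have h1 : ProvL (B :: C' :: rest) := by
          apply ih
          · simp [lsz, sz] at hsz hn ⊢; omega
          · simp
          · intro v
            have := htaut' v
            simp [Fm.eval, List.any_cons] at this ⊢
            tauto
        exact provL_perm hp.symm (Prov.assoc B C' rest h1)

end CompletenessAux

theorem completeness (A : Fm) (h : Taut A) : Prov A := by
  have := CompletenessAux.main (CompletenessAux.lsz [A]) [A] le_rfl (by simp)
    (by intro v; simpa [List.any_cons] using h v)
  simpa [CompletenessAux.ProvL, disj] using this
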